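/- Let G be a finite connected simple graph equipped with a type-2A, 1-planar and nice crossing structure. Let R be a set of edges of G such that every edge in R is crossed and every crossing pair of edges contains exactly one edge of R. Then the spanning subgraph G − R obtained from G by deleting all edges in R is connected. -/
import Mathlib


/-- The associated edges of a crossing pair `ab`, `cd`: those of the vertex pairs
`ac`, `ad`, `bc`, `bd` that are edges of `G`. -/
def AssocEdges {V : Type*} (G : SimpleGraph V) (a b c d : V) : Set (Sym2 V) :=
  {e | e ∈ ({s(a, c), s(a, d), s(b, c), s(b, d)} : Set (Sym2 V)) ∧ e ∈ G.edgeSet}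

/-- A crossing structure on a simple graph `G`: a symmetric irreflexive relation on
unordered pairs of vertices that relates only edges of `G`, and whenever it relates
two edges, these edges have four pairwise distinct endpoints. -/
structure IsCrossingStructure {V : Type*} (G : SimpleGraph V)
    (Cross : Sym2 V → Sym2 V → Prop) : Prop where
  symm : ∀ e f, Cross e f → Cross f e
  irrefl : ∀ e, ¬ Cross e e
  edge_mem : ∀ e f, Cross e f → e ∈ G.edgeSet ∧ f ∈ G.edgeSet
  distinct : ∀ a b c d, Cross s(a, b) s(c, d) →
    a ≠ b ∧ a ≠ c ∧ a ≠ d ∧ b ≠ c ∧ b ≠ d ∧ c ≠ d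

/-- A crossing structure is type-2A if every crossing pair has at least two associated
edges, and whenever a crossing pair has exactly two associated edges, these two edges
share no endpoint (i.e. they are the pair `ac, bd` or the pair `ad, bc`). -/
def IsType2A {V : Type*} (G : SimpleGraph V) (Cross : Sym2 V → Sym2 V → Prop) : Prop :=
  ∀ a b c d, Cross s(a, b) s(c, d) →
    2 ≤ (AssocEdges G a b c d).ncard ∧
      ((AssocEdges G a b c d).ncard = 2 →
        (G.Adj a c ∧ G.Adj b d) ∨ (G.Adj a d ∧ G.Adj b c))

/-- A crossing structure is 1-planar if every edge crosses at most one other edge. -/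
def IsOnePlanar {V : Type*} (Cross : Sym2 V → Sym2 V → Prop) : Prop :=
  ∀ e f g, Cross e f → Cross e g → f = g

/-- A crossing structure is nice if no associated edge of a crossing pair crosses any edge. -/
def IsNice {V : Type*} (G : SimpleGraph V) (Cross : Sym2 V → Sym2 V → Prop) : Prop :=
  ∀ a b c d, Cross s(a, b) s(c, d) →
    ∀ e ∈ AssocEdges G a b c d, ∀ f, ¬ Cross e f

/-- An edge is crossed if it crosses some edge. -/
def IsCrossed {V : Type*} (Cross : Sym2 V → Sym2 V → Prop) (e : Sym2 V) : Prop :=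
  ∃ f, Cross e f

/-- let `G` be connected with a type-2A, 1-planar, nice crossing structure, and
let `R` be a set of edges such that every edge of `R` is crossed and every crossing pair
contains exactly one edge of `R`. Then `G − R` is connected. -/
theorem statement6 {V : Type*} [Fintype V] (G : SimpleGraph V)
    (hGconn : G.Connected)
    (Cross : Sym2 V → Sym2 V → Prop)
    (hC : IsCrossingStructure G Cross) (h2A : IsType2A G Cross)
    (h1p : IsOnePlanar Cross) (hnice : IsNice G Cross)
    (R : Set (Sym2 V))
    (hR1 : ∀ e ∈ R, IsCrossed Cross e)
    (hR2 : ∀ e f : Sym2 V, Cross e f → ((e ∈ R ∧ f ∉ R) ∨ (e ∉ R ∧ f ∈ R))) :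
    (G.deleteEdges R).Connected := by
  set H := G.deleteEdges R with hH
  rw [SimpleGraph.connected_iff] at hGconn ⊢
  refine ⟨?_, hGconn.2⟩
  have key : ∀ a b : V, G.Adj a b → H.Reachable a b := by
    intro a b hab
    by_cases hmem : s(a, b) ∈ R
    · obtain ⟨f, hcross⟩ := hR1 _ hmem
      induction f using Sym2.ind with
      | _ c d =>
      obtain ⟨-, hf⟩ := hC.edge_mem _ _ hcross
      have hcdG : G.Adj c d := hf
      -- associated edges are not in R
      have hAR : ∀ e ∈ AssocEdges G a b c d, e ∉ R := by
        intro e he heR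
        obtain ⟨g, hg⟩ := hR1 e heR
        exact hnice a b c d hcross e he g hg
      -- cd is not in R
      have hcdR : s(c, d) ∉ R := by
        rcases hR2 _ _ hcross with ⟨_, h2⟩ | ⟨h1, _⟩
        · exact h2
        · exact absurd hmem h1
      -- helper: membership in AssocEdges
      have hassoc : ∀ x y : V, s(x, y) ∈ ({s(a, c), s(a, d), s(b, c), s(b, d)} :
          Set (Sym2 V)) → G.Adj x y → H.Adj x y := by
        intro x y hm hadj
        have : s(x, y) ∈ AssocEdges G a b c d := ⟨hm, hadj⟩
        exact SimpleGraph.deleteEdges_adj.mpr ⟨hadj, hAR _ this⟩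
      have hsub2 : ∀ s t u : Sym2 V, AssocEdges G a b c d ⊆ {s, t} →
          (AssocEdges G a b c d).ncard = 2 := by
        intro s t u hsub
        have hle : (AssocEdges G a b c d).ncard ≤ 2 := by
          calc (AssocEdges G a b c d).ncard ≤ ({s, t} : Set (Sym2 V)).ncard :=
                Set.ncard_le_ncard hsub (Set.toFinite _)
            _ ≤ 2 := by
                have := Set.ncard_insert_le s ({t} : Set (Sym2 V))
                simpa [Set.ncard_singleton] using this
        exact le_antisymm hle (h2A a b c d hcross).1
      -- a is adjacent (in H) to c or d
      have ha : H.Adj a c ∨ H.Adj a d := by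
        by_contra hcon
        push_neg at hcon
        have hac : ¬ G.Adj a c := fun h =>
          hcon.1 (hassoc a c (by simp) h)
        have had : ¬ G.Adj a d := fun h =>
          hcon.2 (hassoc a d (by simp) h)
        have hsub : AssocEdges G a b c d ⊆ {s(b, c), s(b, d)} := by
          rintro e ⟨hm, he⟩
          simp only [Set.mem_insert_iff, Set.mem_singleton_iff] at hm ⊢
          rcases hm with rfl | rfl | rfl | rfl
          · exact absurd he hac
          · exact absurd he had
          · left; rfl
          · right; rfl
        rcases (h2A a b c d hcross).2 (hsub2 _ _ s(a, c) hsub) with ⟨h, -⟩ | ⟨h, -⟩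
        · exact hac h
        · exact had h
      -- b is adjacent (in H) to c or d
      have hb : H.Adj b c ∨ H.Adj b d := by
        by_contra hcon
        push_neg at hcon
        have hbc : ¬ G.Adj b c := fun h =>
          hcon.1 (hassoc b c (by simp) h)
        have hbd : ¬ G.Adj b d := fun h =>
          hcon.2 (hassoc b d (by simp) h)
        have hsub : AssocEdges G a b c d ⊆ {s(a, c), s(a, d)} := by
          rintro e ⟨hm, he⟩
          simp only [Set.mem_insert_iff, Set.mem_singleton_iff] at hm ⊢
          rcases hm with rfl | rfl | rfl | rfl
          · left; rfl
          · right; rfl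
          · exact absurd he hbc
          · exact absurd he hbd
        rcases (h2A a b c d hcross).2 (hsub2 _ _ s(a, c) hsub) with ⟨-, h⟩ | ⟨-, h⟩
        · exact hbd h
        · exact hbc h
      have hcd : H.Reachable c d :=
        (SimpleGraph.deleteEdges_adj.mpr ⟨hcdG, hcdR⟩).reachable
      have hacR : H.Reachable a c := by
        rcases ha with h | h
        · exact h.reachable
        · exact h.reachable.trans hcd.symm
      have hbcR : H.Reachable b c := by
        rcases hb with h | h
        · exact h.reachable
        · exact h.reachable.trans hcd.symm
      exact hacR.trans hbcR.symm
    · exact (SimpleGraph.deleteEdges_adj.mpr ⟨hab, hmem⟩).reachable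
  intro u v
  obtain ⟨w⟩ := hGconn.1 u v
  induction w with
  | nil => exact SimpleGraph.Reachable.refl _
  | cons h _ ih => exact (key _ _ h).trans ih
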